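/- The map that deletes the last symbol gives a bijection between the set of permutations of [n] avoiding {3124, 3142, 4123, 4132} whose last entry is n, and the set of permutations of [n-1] avoiding 312. -/
import Mathlib

set_option maxRecDepth 4000

def Contains {n k : ℕ} (σ : Equiv.Perm (Fin n)) (τ : Fin k → ℕ) : Prop :=
  ∃ f : Fin k → Fin n, StrictMono f ∧ ∀ a b : Fin k, τ a < τ b ↔ σ (f a) < σ (f b)

def AvoidsT2 {n : ℕ} (σ : Equiv.Perm (Fin n)) : Prop :=
  ¬ Contains σ ![2,0,1,3] ∧ ¬ Contains σ ![2,0,3,1] ∧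
  ¬ Contains σ ![3,0,1,2] ∧ ¬ Contains σ ![3,0,2,1]

namespace T2Aux

variable {n : ℕ}

/-- Restrict a permutation of `Fin (n+1)` fixing `last n` to `Fin n`. -/
noncomputable def restrict (σ : Equiv.Perm (Fin (n+1))) (h : σ (Fin.last n) = Fin.last n) :
    Equiv.Perm (Fin n) :=
  Equiv.ofBijective (fun i => ⟨(σ i.castSucc : ℕ), by
      have hne : σ i.castSucc ≠ Fin.last n := by
        intro he
        exact absurd (σ.injective (he.trans h.symm)) (Fin.castSucc_lt_last i).ne
      exact Fin.val_lt_last hne⟩)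
    (Finite.injective_iff_bijective.mp (by
      intro i j hij
      dsimp only at hij
      simp only [Fin.mk.injEq] at hij
      exact Fin.castSucc_injective n (σ.injective (Fin.ext hij))))

lemma restrict_val (σ : Equiv.Perm (Fin (n+1))) (h : σ (Fin.last n) = Fin.last n)
    (i : Fin n) : ((restrict σ h) i : ℕ) = (σ i.castSucc : ℕ) := rfl

lemma sigma_castSucc_lt (σ : Equiv.Perm (Fin (n+1))) (h : σ (Fin.last n) = Fin.last n)
    (i : Fin n) : (σ i.castSucc : ℕ) < n := ((restrict σ h) i).isLt

/-- Extend a permutation of `Fin n` to `Fin (n+1)` fixing `last n`. -/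
noncomputable def extLast (π : Equiv.Perm (Fin n)) : Equiv.Perm (Fin (n+1)) :=
  Equiv.ofBijective
    (fun j => if hj : (j : ℕ) < n then (π ⟨j, hj⟩).castSucc else Fin.last n)
    (Finite.injective_iff_bijective.mp (by
      intro j k hjk
      dsimp only at hjk
      by_cases hj : (j : ℕ) < n <;> by_cases hk : (k : ℕ) < n
      · rw [dif_pos hj, dif_pos hk] at hjk
        have h1 := π.injective (Fin.castSucc_injective n hjk)
        simp only [Fin.mk.injEq] at h1
        exact Fin.ext h1
      · rw [dif_pos hj, dif_neg hk] at hjk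
        exact absurd hjk (Fin.castSucc_lt_last _).ne
      · rw [dif_neg hj, dif_pos hk] at hjk
        exact absurd hjk.symm (Fin.castSucc_lt_last _).ne
      · have h1 : (j : ℕ) = n := le_antisymm (Nat.lt_succ_iff.mp j.isLt) (not_lt.mp hj)
        have h2 : (k : ℕ) = n := le_antisymm (Nat.lt_succ_iff.mp k.isLt) (not_lt.mp hk)
        exact Fin.ext (h1.trans h2.symm)))

lemma extLast_apply (π : Equiv.Perm (Fin n)) (j : Fin (n+1)) :
    extLast π j = if hj : (j : ℕ) < n then (π ⟨j, hj⟩).castSucc else Fin.last n := rfl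

@[simp] lemma extLast_last (π : Equiv.Perm (Fin n)) : extLast π (Fin.last n) = Fin.last n := by
  rw [extLast_apply, dif_neg (by simp)]

lemma restrict_extLast (π : Equiv.Perm (Fin n)) :
    restrict (extLast π) (extLast_last π) = π := by
  apply Equiv.ext; intro i
  apply Fin.ext
  show (extLast π i.castSucc : ℕ) = (π i : ℕ)
  rw [extLast_apply, dif_pos (by simpa using i.isLt)]
  simp

lemma extLast_restrict (σ : Equiv.Perm (Fin (n+1))) (h : σ (Fin.last n) = Fin.last n) :
    extLast (restrict σ h) = σ := by
  apply Equiv.ext; intro j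
  by_cases hj : (j : ℕ) < n
  · apply Fin.ext
    show (extLast (restrict σ h) j : ℕ) = (σ j : ℕ)
    rw [extLast_apply, dif_pos hj]
    have e : Fin.castSucc (⟨(j : ℕ), hj⟩ : Fin n) = j := Fin.ext rfl
    show (((restrict σ h) ⟨(j : ℕ), hj⟩).castSucc : ℕ) = (σ j : ℕ)
    rw [Fin.coe_castSucc, restrict_val, e]
  · have hjl : j = Fin.last n :=
      Fin.ext (le_antisymm (Nat.lt_succ_iff.mp j.isLt) (not_lt.mp hj))
    subst hjl
    rw [extLast_last, h]

lemma contains201_restrict (σ : Equiv.Perm (Fin (n+1))) (h : σ (Fin.last n) = Fin.last n)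
    (a b c : Fin (n+1)) (hab : a < b) (hbc : b < c) (hc : c ≠ Fin.last n)
    (h1 : σ b < σ c) (h2 : σ c < σ a) :
    Contains (restrict σ h) ![2,0,1] := by
  have hcn : (c : ℕ) < n := Fin.val_lt_last hc
  have hbc' : (b : ℕ) < (c : ℕ) := hbc
  have hab' : (a : ℕ) < (b : ℕ) := hab
  have hbn : (b : ℕ) < n := lt_trans hbc' hcn
  have han : (a : ℕ) < n := lt_trans hab' hbn
  refine ⟨![⟨(a : ℕ), han⟩, ⟨(b : ℕ), hbn⟩, ⟨(c : ℕ), hcn⟩], ?_, ?_⟩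
  · intro x y hxy
    have vf0 : ∀ hh : (0:ℕ) < 3, (![(⟨(a : ℕ), han⟩ : Fin n), ⟨(b : ℕ), hbn⟩, ⟨(c : ℕ), hcn⟩]) ⟨0, hh⟩ = ⟨(a : ℕ), han⟩ := fun _ => rfl
    have vf1 : ∀ hh : (1:ℕ) < 3, (![(⟨(a : ℕ), han⟩ : Fin n), ⟨(b : ℕ), hbn⟩, ⟨(c : ℕ), hcn⟩]) ⟨1, hh⟩ = ⟨(b : ℕ), hbn⟩ := fun _ => rfl
    have vf2 : ∀ hh : (2:ℕ) < 3, (![(⟨(a : ℕ), han⟩ : Fin n), ⟨(b : ℕ), hbn⟩, ⟨(c : ℕ), hcn⟩]) ⟨2, hh⟩ = ⟨(c : ℕ), hcn⟩ := fun _ => rfl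
    fin_cases x <;> fin_cases y <;>
      simp only [vf0, vf1, vf2, Fin.lt_def, Fin.mk_lt_mk] at hxy ⊢ <;> omega
  · have ea : Fin.castSucc (⟨(a : ℕ), han⟩ : Fin n) = a := Fin.ext rfl
    have eb : Fin.castSucc (⟨(b : ℕ), hbn⟩ : Fin n) = b := Fin.ext rfl
    have ec : Fin.castSucc (⟨(c : ℕ), hcn⟩ : Fin n) = c := Fin.ext rfl
    have hA : ((restrict σ h) ⟨(a : ℕ), han⟩ : ℕ) = (σ a : ℕ) := by rw [restrict_val, ea]
    have hB : ((restrict σ h) ⟨(b : ℕ), hbn⟩ : ℕ) = (σ b : ℕ) := by rw [restrict_val, eb]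
    have hC : ((restrict σ h) ⟨(c : ℕ), hcn⟩ : ℕ) = (σ c : ℕ) := by rw [restrict_val, ec]
    have h1' : (σ b : ℕ) < (σ c : ℕ) := h1
    have h2' : (σ c : ℕ) < (σ a : ℕ) := h2
    intro x y
    have vf0 : ∀ hh : (0:ℕ) < 3, (![(⟨(a : ℕ), han⟩ : Fin n), ⟨(b : ℕ), hbn⟩, ⟨(c : ℕ), hcn⟩]) ⟨0, hh⟩ = ⟨(a : ℕ), han⟩ := fun _ => rfl
    have vf1 : ∀ hh : (1:ℕ) < 3, (![(⟨(a : ℕ), han⟩ : Fin n), ⟨(b : ℕ), hbn⟩, ⟨(c : ℕ), hcn⟩]) ⟨1, hh⟩ = ⟨(b : ℕ), hbn⟩ := fun _ => rfl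
    have vf2 : ∀ hh : (2:ℕ) < 3, (![(⟨(a : ℕ), han⟩ : Fin n), ⟨(b : ℕ), hbn⟩, ⟨(c : ℕ), hcn⟩]) ⟨2, hh⟩ = ⟨(c : ℕ), hcn⟩ := fun _ => rfl
    have vp0 : ∀ hh : (0:ℕ) < 3, (![2,0,1] : Fin 3 → ℕ) ⟨0, hh⟩ = 2 := fun _ => rfl
    have vp1 : ∀ hh : (1:ℕ) < 3, (![2,0,1] : Fin 3 → ℕ) ⟨1, hh⟩ = 0 := fun _ => rfl
    have vp2 : ∀ hh : (2:ℕ) < 3, (![2,0,1] : Fin 3 → ℕ) ⟨2, hh⟩ = 1 := fun _ => rfl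
    fin_cases x <;> fin_cases y <;>
      simp only [vf0, vf1, vf2, vp0, vp1, vp2, Fin.lt_def, hA, hB, hC] <;> omega

lemma contains2013_of (σ : Equiv.Perm (Fin (n+1))) (h : σ (Fin.last n) = Fin.last n) :
    Contains (restrict σ h) ![2,0,1] → Contains σ ![2,0,1,3] := by
  rintro ⟨f, hf, hP⟩
  have h12 : (σ (f 1).castSucc : ℕ) < (σ (f 2).castSucc : ℕ) := (hP 1 2).mp (by decide)
  have h20 : (σ (f 2).castSucc : ℕ) < (σ (f 0).castSucc : ℕ) := (hP 2 0).mp (by decide)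
  have hs0 : (σ (f 0).castSucc : ℕ) < n := sigma_castSucc_lt σ h _
  have hs1 : (σ (f 1).castSucc : ℕ) < n := sigma_castSucc_lt σ h _
  have hs2 : (σ (f 2).castSucc : ℕ) < n := sigma_castSucc_lt σ h _
  have hlast : (σ (Fin.last n) : ℕ) = n := by rw [h]; rfl
  have hf01 : ((f 0) : ℕ) < ((f 1) : ℕ) := hf (by decide)
  have hf12 : ((f 1) : ℕ) < ((f 2) : ℕ) := hf (by decide)
  have h2n : ((f 2) : ℕ) < n := (f 2).isLt
  refine ⟨![(f 0).castSucc, (f 1).castSucc, (f 2).castSucc, Fin.last n], ?_, ?_⟩ <;>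
  · have vg0 : ∀ hh : (0:ℕ) < 4, (![(f 0).castSucc, (f 1).castSucc, (f 2).castSucc, Fin.last n]) ⟨0, hh⟩ = (f 0).castSucc := fun _ => rfl
    have vg1 : ∀ hh : (1:ℕ) < 4, (![(f 0).castSucc, (f 1).castSucc, (f 2).castSucc, Fin.last n]) ⟨1, hh⟩ = (f 1).castSucc := fun _ => rfl
    have vg2 : ∀ hh : (2:ℕ) < 4, (![(f 0).castSucc, (f 1).castSucc, (f 2).castSucc, Fin.last n]) ⟨2, hh⟩ = (f 2).castSucc := fun _ => rfl
    have vg3 : ∀ hh : (3:ℕ) < 4, (![(f 0).castSucc, (f 1).castSucc, (f 2).castSucc, Fin.last n]) ⟨3, hh⟩ = Fin.last n := fun _ => rfl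
    have vp0 : ∀ hh : (0:ℕ) < 4, (![2,0,1,3] : Fin 4 → ℕ) ⟨0, hh⟩ = 2 := fun _ => rfl
    have vp1 : ∀ hh : (1:ℕ) < 4, (![2,0,1,3] : Fin 4 → ℕ) ⟨1, hh⟩ = 0 := fun _ => rfl
    have vp2 : ∀ hh : (2:ℕ) < 4, (![2,0,1,3] : Fin 4 → ℕ) ⟨2, hh⟩ = 1 := fun _ => rfl
    have vp3 : ∀ hh : (3:ℕ) < 4, (![2,0,1,3] : Fin 4 → ℕ) ⟨3, hh⟩ = 3 := fun _ => rfl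
    first
    | (intro x y hxy
       fin_cases x <;> fin_cases y <;>
         simp only [vg0, vg1, vg2, vg3, Fin.lt_def, Fin.mk_lt_mk, Fin.coe_castSucc,
           Fin.val_last] at hxy ⊢ <;> omega)
    | (intro x y
       fin_cases x <;> fin_cases y <;>
         simp only [vg0, vg1, vg2, vg3, vp0, vp1, vp2, vp3, Fin.lt_def, Fin.coe_castSucc,
           Fin.val_last] <;> omega)

lemma avoids_iff (σ : Equiv.Perm (Fin (n+1))) (h : σ (Fin.last n) = Fin.last n) :
    AvoidsT2 σ ↔ ¬ Contains (restrict σ h) ![2,0,1] := by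
  constructor
  · intro ha hc
    exact ha.1 (contains2013_of σ h hc)
  · intro hnc
    refine ⟨?_, ?_, ?_, ?_⟩
    · rintro ⟨g, hg, hP⟩
      exact hnc (contains201_restrict σ h (g 0) (g 1) (g 2)
        (hg (by decide)) (hg (by decide))
        (lt_of_lt_of_le (hg (by decide : (2:Fin 4) < 3)) (Fin.le_last _)).ne
        ((hP 1 2).mp (by decide)) ((hP 2 0).mp (by decide)))
    · rintro ⟨g, hg, hP⟩
      have h13 : σ (g 1) < σ (g 3) := (hP 1 3).mp (by decide)
      have h30 : σ (g 3) < σ (g 0) := (hP 3 0).mp (by decide)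
      have hne : g 3 ≠ Fin.last n := by
        intro he
        rw [he, h] at h30
        exact absurd h30 (not_lt.mpr (Fin.le_last _))
      exact hnc (contains201_restrict σ h (g 0) (g 1) (g 3)
        (hg (by decide)) (hg (by decide)) hne h13 h30)
    · rintro ⟨g, hg, hP⟩
      exact hnc (contains201_restrict σ h (g 0) (g 1) (g 2)
        (hg (by decide)) (hg (by decide))
        (lt_of_lt_of_le (hg (by decide : (2:Fin 4) < 3)) (Fin.le_last _)).ne
        ((hP 1 2).mp (by decide)) ((hP 2 0).mp (by decide)))
    · rintro ⟨g, hg, hP⟩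
      have h13 : σ (g 1) < σ (g 3) := (hP 1 3).mp (by decide)
      have h30 : σ (g 3) < σ (g 0) := (hP 3 0).mp (by decide)
      have hne : g 3 ≠ Fin.last n := by
        intro he
        rw [he, h] at h30
        exact absurd h30 (not_lt.mpr (Fin.le_last _))
      exact hnc (contains201_restrict σ h (g 0) (g 1) (g 3)
        (hg (by decide)) (hg (by decide)) hne h13 h30)

end T2Aux

/-- Deleting the last symbol is a bijection between permutations of `[n+1]`
avoiding `T₂ = {3124, 3142, 4123, 4132}` ending with the maximum symbol, and
permutations of `[n]` avoiding `312`. -/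
theorem delete_last_bijection_T2 (n : ℕ) (hn : 1 ≤ n) :
    ∃ e : {σ : Equiv.Perm (Fin (n + 1)) // σ (Fin.last n) = Fin.last n ∧ AvoidsT2 σ} ≃
          {π : Equiv.Perm (Fin n) // ¬ Contains π ![2,0,1]},
      ∀ (σ : {σ : Equiv.Perm (Fin (n + 1)) // σ (Fin.last n) = Fin.last n ∧ AvoidsT2 σ})
        (i : Fin n),
        (((e σ : Equiv.Perm (Fin n)) i : ℕ)) =
          (((σ : Equiv.Perm (Fin (n + 1))) i.castSucc : ℕ)) := by
  refine ⟨{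
    toFun := fun s => ⟨T2Aux.restrict s.1 s.2.1, (T2Aux.avoids_iff s.1 s.2.1).mp s.2.2⟩
    invFun := fun p => ⟨T2Aux.extLast p.1, T2Aux.extLast_last p.1,
      (T2Aux.avoids_iff _ (T2Aux.extLast_last p.1)).mpr
        (by rw [T2Aux.restrict_extLast]; exact p.2)⟩
    left_inv := fun s => Subtype.ext (T2Aux.extLast_restrict s.1 s.2.1)
    right_inv := fun p => Subtype.ext (T2Aux.restrict_extLast p.1) }, ?_⟩
  intro σ i
  rfl
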